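/- Define f(Z) = (1 − Z²) − (5 − 4Z³)²/27, the squared Y-coordinate of the separatrix of the 3-twisting-and-turning flow at critical coupling as a function of Z. Then f(1/2) = 0, f′(1/2) = 0, and f″(1/2) = 4/3. Consequently, the limit as Z → 1/2 (Z ≠ 1/2, within the region where f(Z) ≥ 0) of the quantity ((Z − 1/2)² − f(Z)) / ((Z − 1/2)² + f(Z)) — the cosine of the angle between the projections onto the y–z plane of the two separatrix branches (±√(f(Z)), Z − 1/2) at the saddle — equals 1/5. In particular, the separatrix branches of the 3TaT flow at critical coupling are not orthogonal at the saddle. -/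

import Mathlib

private lemma hasDerivAt_f (Z : ℝ) :
    HasDerivAt (fun Z : ℝ => (1 - Z ^ 2) - (5 - 4 * Z ^ 3) ^ 2 / 27)
      (-2 * Z + 8 * Z ^ 2 * (5 - 4 * Z ^ 3) / 9) Z := by
  have h1 := (hasDerivAt_pow 2 Z).const_sub 1
  have h2 := ((((hasDerivAt_pow 3 Z).const_mul 4).const_sub 5).pow 2).div_const 27
  convert h1.sub h2 using 1
  · rfl
  · rfl
  · funext x; simp only [Pi.sub_apply, Pi.pow_apply]
  · push_cast; ring

private lemma deriv_f :
    deriv (fun Z : ℝ => (1 - Z ^ 2) - (5 - 4 * Z ^ 3) ^ 2 / 27)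
      = fun Z : ℝ => -2 * Z + 8 * Z ^ 2 * (5 - 4 * Z ^ 3) / 9 := by
  funext Z
  exact (hasDerivAt_f Z).deriv

private lemma hasDerivAt_f' (Z : ℝ) :
    HasDerivAt (fun Z : ℝ => -2 * Z + 8 * Z ^ 2 * (5 - 4 * Z ^ 3) / 9)
      (-2 + (80 * Z - 160 * Z ^ 4) / 9) Z := by
  have h1 := (hasDerivAt_id Z).const_mul (-2 : ℝ)
  have h2 := ((((hasDerivAt_pow 2 Z).const_mul 8).mul
      (((hasDerivAt_pow 3 Z).const_mul 4).const_sub 5))).div_const 9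
  convert h1.add h2 using 1
  · rfl
  · rfl
  · funext x; simp only [Pi.add_apply, Pi.mul_apply, id]
  · push_cast; ring

/-- For `f(Z) = (1 − Z²) − (5 − 4Z³)²/27`, the squared Y-coordinate of the 3TaT
separatrix at critical coupling: `f(1/2) = 0`, `f′(1/2) = 0`, `f″(1/2) = 4/3`, and
the cosine of the angle between the projected separatrix branches,
`((Z−1/2)² − f(Z))/((Z−1/2)² + f(Z))`, tends to `1/5` as `Z → 1/2` within
`{Z ≠ 1/2, f(Z) ≥ 0}`; in particular the branches are not orthogonal. -/
theorem threeTaT_branch_angle (f : ℝ → ℝ)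
    (hf : f = fun Z => (1 - Z ^ 2) - (5 - 4 * Z ^ 3) ^ 2 / 27) :
    f (1 / 2) = 0 ∧ deriv f (1 / 2) = 0 ∧ deriv (deriv f) (1 / 2) = 4 / 3 ∧
    Filter.Tendsto
      (fun Z => ((Z - 1 / 2) ^ 2 - f Z) / ((Z - 1 / 2) ^ 2 + f Z))
      (nhdsWithin (1 / 2) {Z : ℝ | Z ≠ 1 / 2 ∧ 0 ≤ f Z})
      (nhds (1 / 5)) := by
  subst hf
  refine ⟨by norm_num, ?_, ?_, ?_⟩
  · rw [deriv_f]; norm_num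
  · rw [deriv_f]
    rw [show deriv (fun Z : ℝ => -2 * Z + 8 * Z ^ 2 * (5 - 4 * Z ^ 3) / 9) (1/2)
        = -2 + (80 * (1/2 : ℝ) - 160 * (1/2 : ℝ) ^ 4) / 9 from (hasDerivAt_f' _).deriv]
    norm_num
  · -- the limit
    set g : ℝ → ℝ := fun Z => -16 * Z ^ 4 - 16 * Z ^ 3 - 12 * Z ^ 2 + 32 * Z + 8 with hg
    have key : ∀ Z : ℝ,
        ((1 - Z ^ 2) - (5 - 4 * Z ^ 3) ^ 2 / 27) = (Z - 1/2) ^ 2 * (g Z / 27) := by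
      intro Z; simp only [hg]; ring
    have hcont : Filter.Tendsto (fun Z : ℝ => (27 - g Z) / (27 + g Z))
        (nhds (1/2)) (nhds (1/5)) := by
      have hgc : Continuous g := by fun_prop
      have h1 : ContinuousAt (fun Z : ℝ => (27 - g Z) / (27 + g Z)) (1/2) := by
        apply ContinuousAt.div
        · fun_prop
        · fun_prop
        · simp only [hg]; norm_num
      have : g (1/2) = 18 := by simp only [hg]; norm_num
      have h2 : (27 - g (1/2)) / (27 + g (1/2)) = 1/5 := by rw [this]; norm_num
      have h3 := h1.tendsto
      rw [h2] at h3
      exact h3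
    refine Filter.Tendsto.congr' ?_ (hcont.mono_left nhdsWithin_le_nhds)
    filter_upwards [self_mem_nhdsWithin] with Z hZ
    have hne : (Z - 1/2) ^ 2 ≠ 0 := pow_ne_zero _ (sub_ne_zero.mpr hZ.1)
    rw [key Z]
    rw [show (Z - 1/2) ^ 2 - (Z - 1/2) ^ 2 * (g Z / 27)
        = (Z - 1/2) ^ 2 * ((27 - g Z) / 27) by ring,
      show (Z - 1/2) ^ 2 + (Z - 1/2) ^ 2 * (g Z / 27)
        = (Z - 1/2) ^ 2 * ((27 + g Z) / 27) by ring,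
      mul_div_mul_left _ _ hne]
    rcases eq_or_ne (27 + g Z) 0 with h | h
    · simp [h]
    · field_simp
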